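/- The formal power series F_p = Σ t_n^{(p)} X^n over F_p, where t_n^{(p)} is the sum of base-p digits of n reduced mod p, satisfies (1 - X)^{p+1} F_p^p - (1 - X)^2 F_p + X = 0. -/

import Mathlib

open PowerSeries

section Aux

lemma tm_charP (p : ℕ) (hp : p.Prime) : CharP (PowerSeries (ZMod p)) p := by
  haveI : Fact p.Prime := ⟨hp⟩
  exact charP_of_injective_ringHom (f := (PowerSeries.C (R := ZMod p)))
    (fun a b h => by simpa using congrArg (PowerSeries.constantCoeff (R := ZMod p)) h) p

/-- Frobenius on power series over `ZMod p`, coefficientwise. -/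
lemma tm_coeff_pow_char (p : ℕ) (hp : p.Prime) (f : PowerSeries (ZMod p)) (n : ℕ) :
    (PowerSeries.coeff (R := ZMod p) n) (f ^ p) =
      if p ∣ n then (PowerSeries.coeff (R := ZMod p) (n / p)) f else 0 := by
  haveI : Fact p.Prime := ⟨hp⟩
  haveI : CharP (PowerSeries (ZMod p)) p := tm_charP p hp
  set P := PowerSeries.trunc (n + 1) f with hP
  have hsplit : f ^ p = (P : PowerSeries (ZMod p)) ^ p + (f - P) ^ p := by
    have := add_pow_char (R := PowerSeries (ZMod p)) (p := p)
      (x := (P : PowerSeries (ZMod p))) (y := f - (P : PowerSeries (ZMod p)))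
    simpa using this
  have hdvd : (X : PowerSeries (ZMod p)) ^ (n + 1) ∣ (f - P) := by
    rw [PowerSeries.X_pow_dvd_iff]
    intro m hm
    simp [map_sub, Polynomial.coeff_coe, hP, PowerSeries.coeff_trunc, hm]
  have htail : (PowerSeries.coeff (R := ZMod p) n) ((f - (P : PowerSeries (ZMod p))) ^ p) = 0 := by
    have h2 : (X : PowerSeries (ZMod p)) ^ ((n + 1) * p) ∣ (f - P) ^ p := by
      simpa [pow_mul] using pow_dvd_pow_of_dvd hdvd p
    rw [PowerSeries.X_pow_dvd_iff] at h2
    exact h2 n (lt_of_lt_of_le (Nat.lt_succ_self n)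
      (Nat.le_mul_of_pos_right _ hp.pos))
  have hPp : (P : PowerSeries (ZMod p)) ^ p = ((P ^ p : Polynomial (ZMod p)) : PowerSeries (ZMod p)) := by
    rw [Polynomial.coe_pow]
  have hexp : P ^ p = Polynomial.expand (ZMod p) p P := by
    have := Polynomial.map_frobenius_expand p P
    rw [ZMod.frobenius_zmod, Polynomial.map_id] at this
    exact this.symm
  rw [hsplit, map_add, htail, add_zero, hPp, Polynomial.coeff_coe, hexp,
    Polynomial.coeff_expand hp.pos]
  split_ifs with h
  · rw [PowerSeries.coeff_trunc, if_pos (Nat.lt_succ_of_le (Nat.div_le_self n p))]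
  · rfl

lemma tm_coeff_geom (p k : ℕ) :
    (PowerSeries.coeff (R := ZMod p) k) (∑ i ∈ Finset.range p, (X : PowerSeries (ZMod p)) ^ i)
      = if k < p then 1 else 0 := by
  rw [map_sum]
  simp only [PowerSeries.coeff_X_pow]
  rw [Finset.sum_ite_eq (Finset.range p) k (fun _ => (1 : ZMod p))]
  simp [Finset.mem_range]

end Aux

theorem thue_morse_series_equation (p : ℕ) (hp : p.Prime)
    (F : PowerSeries (ZMod p))
    (hF : F = PowerSeries.mk fun n => ((Nat.digits p n).sum : ZMod p)) :
    (1 - PowerSeries.X) ^ (p + 1) * F ^ p - (1 - PowerSeries.X) ^ 2 * F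
      + PowerSeries.X = 0 := by
  haveI : Fact p.Prime := ⟨hp⟩
  haveI : CharP (PowerSeries (ZMod p)) p := tm_charP p hp
  set S : PowerSeries (ZMod p) := ∑ i ∈ Finset.range p, (X : PowerSeries (ZMod p)) ^ i with hSdef
  set D : PowerSeries (ZMod p) := PowerSeries.mk (fun n => (n : ZMod p)) with hDdef
  -- geometric sum identity
  have hS : (1 - (X : PowerSeries (ZMod p))) * S = 1 - X ^ p := by
    have h := geom_sum_mul (X : PowerSeries (ZMod p)) p
    rw [hSdef]
    linear_combination -h
  -- Frobenius on 1 - X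
  have hPfrob : (1 - (X : PowerSeries (ZMod p))) ^ p = 1 - X ^ p := by
    rw [sub_pow_char, one_pow]
  -- (1 - X)^2 * D = X
  have hD : (1 - (X : PowerSeries (ZMod p))) ^ 2 * D = X := by
    have h1 : (1 - (X : PowerSeries (ZMod p))) * D
        = PowerSeries.mk (fun n => if n = 0 then (0 : ZMod p) else 1) := by
      ext n
      cases n with
      | zero => simp [hDdef, sub_mul, one_mul]
      | succ m =>
        rw [sub_mul, one_mul, map_sub, PowerSeries.coeff_succ_X_mul]
        simp only [hDdef, PowerSeries.coeff_mk, Nat.succ_ne_zero, if_false]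
        push_cast
        ring
    rw [sq, mul_assoc, h1]
    ext n
    cases n with
    | zero => simp [sub_mul, one_mul]
    | succ m =>
      rw [sub_mul, one_mul, map_sub, PowerSeries.coeff_succ_X_mul]
      simp only [PowerSeries.coeff_mk, Nat.succ_ne_zero, if_false, PowerSeries.coeff_X]
      cases m with
      | zero => simp
      | succ k => simp [Nat.succ_ne_zero]
  -- the key recursion: F = S * F^p + D
  have hE : F = S * F ^ p + D := by
    ext n
    rw [map_add, PowerSeries.coeff_mul]
    have hmem : (n % p, n - n % p) ∈ Finset.HasAntidiagonal.antidiagonal n := by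
      rw [Finset.HasAntidiagonal.mem_antidiagonal]
      exact Nat.add_sub_cancel' (Nat.mod_le n p)
    have hsub : n - n % p = p * (n / p) := by
      conv_lhs => rw [← Nat.mod_add_div n p]
      simp
    rw [Finset.sum_eq_single_of_mem (n % p, n - n % p) hmem]
    · rw [tm_coeff_geom, if_pos (Nat.mod_lt n hp.pos), one_mul,
        tm_coeff_pow_char p hp, hsub, if_pos (Dvd.intro _ rfl),
        Nat.mul_div_cancel_left _ hp.pos]
      rw [hF, hDdef]
      simp only [PowerSeries.coeff_mk]
      rcases Nat.eq_zero_or_pos n with hn | hn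
      · subst hn; simp
      · rw [Nat.digits_def' hp.one_lt hn, List.sum_cons, Nat.cast_add]
        have h5 : ((n % p : ℕ) : ZMod p) = (n : ZMod p) := by
          conv_rhs => rw [← Nat.mod_add_div n p]
          push_cast
          simp
        rw [h5, add_comm]
    · rintro ⟨i, j⟩ hij hne
      rw [Finset.HasAntidiagonal.mem_antidiagonal] at hij
      rw [tm_coeff_geom, tm_coeff_pow_char p hp]
      by_cases hi : i < p
      · rw [if_pos hi]
        by_cases hj : p ∣ j
        · exfalso
          apply hne
          obtain ⟨k, hk⟩ := hj
          have : i = n % p := by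
            have : n = i + p * k := by rw [← hij, hk]
            rw [this, Nat.add_mul_mod_self_left, Nat.mod_eq_of_lt hi]
          subst this
          have h6 : j = n - n % p := by omega
          rw [h6]
        · rw [if_neg hj, mul_zero]
      · rw [if_neg hi, zero_mul]
  -- put everything together
  linear_combination (-(1 - (X : PowerSeries (ZMod p))) ^ 2) * hE - hD
    + (1 - (X : PowerSeries (ZMod p))) * F ^ p * hPfrob
    - (1 - (X : PowerSeries (ZMod p))) * F ^ p * hS
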